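/- The generating function 𝐂(u) = 1 + ∑_{r≥1} 𝒞(r)·u^r of the generalized Catalan polynomials satisfies the functional equation (𝐂(u) - 1)/u - z·𝐂(u) = (1-z)·𝐂(u)², i.e. 𝐂(u) - 1 - z·u·𝐂(u) = (1-z)·u·𝐂(u)² as formal power series in u. -/

import Mathlib

open Finset Polynomial PowerSeries

/-- The generalized Catalan polynomial
`𝒞(r) = ∑_{m=0}^{r} z^{r-m}(1-z)^m C(r+m, r-m) Cat(m)` in `ℚ[z]`,
where `Cat(m) = (1/(m+1)) C(2m,m)` is the Catalan number. Note `𝒞(0) = 1`. -/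
noncomputable def genCatalan (r : ℕ) : Polynomial ℚ :=
  ∑ m ∈ Finset.range (r + 1),
    Polynomial.X ^ (r - m) * (1 - Polynomial.X) ^ m *
      Polynomial.C ((Nat.choose (r + m) (r - m) : ℚ) * (1 / ((m : ℚ) + 1)) *
        (Nat.choose (2 * m) m : ℚ))

/- ### Auxiliary material -/

lemma invOneSubPow_mul' (S : Type*) [CommRing S] (d e : ℕ) :
    PowerSeries.invOneSubPow S d * PowerSeries.invOneSubPow S e
      = PowerSeries.invOneSubPow S (d + e) := by
  rw [invOneSubPow_eq_inv_one_sub_pow, invOneSubPow_eq_inv_one_sub_pow,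
    invOneSubPow_eq_inv_one_sub_pow, ← pow_add]

lemma mk_choose_eq' (a : ℕ) :
    (PowerSeries.mk fun i => ((i + a).choose (2 * a) : ℚ))
      = (PowerSeries.invOneSubPow ℚ (2 * a + 1)).val * PowerSeries.X ^ a := by
  ext n
  rw [PowerSeries.coeff_mk, PowerSeries.coeff_mul_X_pow',
    PowerSeries.invOneSubPow_val_succ_eq_mk_add_choose]
  split_ifs with h
  · rw [PowerSeries.coeff_mk]
    have : 2 * a + (n - a) = n + a := by omega
    rw [this]
  · exact_mod_cast congrArg (Nat.cast (R := ℚ)) (Nat.choose_eq_zero_of_lt (by omega))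

/-- The key convolution identity
`∑_{i+j=k} C(i+a,2a) C(j+b,2b) = C(k+a+b+1, 2(a+b)+1)`. -/
lemma chooseConv (a b k : ℕ) :
    ∑ p ∈ Finset.HasAntidiagonal.antidiagonal k, ((p.1 + a).choose (2 * a) : ℚ) * ((p.2 + b).choose (2 * b))
      = ((k + (a + b) + 1).choose (2 * (a + b) + 1) : ℚ) := by
  have key : (PowerSeries.mk fun i => ((i + a).choose (2 * a) : ℚ))
      * (PowerSeries.mk fun i => ((i + b).choose (2 * b) : ℚ))
      = (PowerSeries.invOneSubPow ℚ (2 * (a + b) + 2)).val * PowerSeries.X ^ (a + b) := by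
    rw [mk_choose_eq', mk_choose_eq']
    have : ((PowerSeries.invOneSubPow ℚ (2 * a + 1)).val * PowerSeries.X ^ a)
        * ((PowerSeries.invOneSubPow ℚ (2 * b + 1)).val * PowerSeries.X ^ b)
        = ((PowerSeries.invOneSubPow ℚ (2 * a + 1)) * (PowerSeries.invOneSubPow ℚ (2 * b + 1))).val
          * (PowerSeries.X ^ a * PowerSeries.X ^ b) := by
      push_cast [Units.val_mul]
      ring
    rw [this, invOneSubPow_mul', ← pow_add]
    have h4 : 2 * a + 1 + (2 * b + 1) = 2 * (a + b) + 2 := by omega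
    rw [h4]
  have h2 := congrArg (PowerSeries.coeff k) key
  rw [PowerSeries.coeff_mul] at h2
  simp only [PowerSeries.coeff_mk] at h2
  rw [h2, PowerSeries.coeff_mul_X_pow']
  have h3 : 2 * (a + b) + 2 = (2 * (a + b) + 1) + 1 := by omega
  rw [h3, PowerSeries.invOneSubPow_val_succ_eq_mk_add_choose]
  split_ifs with h
  · rw [PowerSeries.coeff_mk]
    have h5 : 2 * (a + b) + 1 + (k - (a + b)) = k + (a + b) + 1 := by omega
    rw [h5]
  · exact_mod_cast (congrArg (Nat.cast (R := ℚ)) (Nat.choose_eq_zero_of_lt (by omega))).symm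

/-- Simplified form of the summands of `genCatalan`, extended by zero terms. -/
noncomputable def gcTerm (r m : ℕ) : Polynomial ℚ :=
  Polynomial.X ^ (r - m) * (1 - Polynomial.X) ^ m *
    Polynomial.C ((catalan m : ℚ) * ((r + m).choose (2 * m) : ℚ))

lemma catalan_cast (m : ℕ) :
    (1 / ((m : ℚ) + 1)) * ((2 * m).choose m : ℚ) = (catalan m : ℚ) := by
  have h := succ_mul_catalan_eq_centralBinom m
  rw [Nat.centralBinom] at h
  have h2 : ((m + 1) * catalan m : ℚ) = ((2 * m).choose m : ℚ) := by
    exact_mod_cast congrArg (Nat.cast (R := ℚ)) h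
  have hm : ((m : ℚ) + 1) ≠ 0 := by positivity
  field_simp
  push_cast at h2 ⊢
  linarith [h2]

lemma gcTerm_eq_zero {r m : ℕ} (h : r < m) : gcTerm r m = 0 := by
  have : r + m < 2 * m := by omega
  simp [gcTerm, Nat.choose_eq_zero_of_lt this]

lemma genCatalan_eq_sum (r N : ℕ) (h : r < N) :
    genCatalan r = ∑ m ∈ Finset.range N, gcTerm r m := by
  rw [genCatalan]
  have h1 : ∀ m ∈ Finset.range (r + 1),
      Polynomial.X ^ (r - m) * (1 - Polynomial.X) ^ m *
        Polynomial.C ((Nat.choose (r + m) (r - m) : ℚ) * (1 / ((m : ℚ) + 1)) *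
          (Nat.choose (2 * m) m : ℚ)) = gcTerm r m := by
    intro m hm
    rw [Finset.mem_range] at hm
    have hmr : m ≤ r := by omega
    have hsymm : (r + m).choose (r - m) = (r + m).choose (2 * m) := by
      have h2 : r - m = (r + m) - 2 * m := by omega
      rw [h2, Nat.choose_symm (by omega)]
    rw [gcTerm, hsymm, mul_assoc ((Nat.choose (r + m) (2 * m) : ℚ)), catalan_cast,
      mul_comm ((Nat.choose (r + m) (2 * m) : ℚ))]
  rw [Finset.sum_congr rfl h1]
  exact Finset.sum_subset (Finset.range_subset_range.mpr (by omega))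
    (fun m _ hm => gcTerm_eq_zero (by simp only [Finset.mem_range] at *; omega))

lemma gc_step (k s : ℕ) (hs : s ≤ k) :
    gcTerm (k + 1) (s + 1) - Polynomial.X * gcTerm k (s + 1)
      = Polynomial.X ^ (k - s) * (1 - Polynomial.X) ^ (s + 1) *
          Polynomial.C ((catalan (s + 1) : ℚ) * ((k + s + 1).choose (2 * s + 1) : ℚ)) := by
  have pascal : ((k + 1) + (s + 1)).choose (2 * (s + 1))
      = (k + s + 1).choose (2 * s + 1) + (k + s + 1).choose (2 * s + 2) := by
    have : (k + 1) + (s + 1) = (k + s + 1) + 1 := by omega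
    rw [this]
    have : 2 * (s + 1) = (2 * s + 1) + 1 := by omega
    rw [this, Nat.choose_succ_succ]
  have he : (k + 1) - (s + 1) = k - s := by omega
  rcases Nat.lt_or_ge s k with hlt | hge
  · have hx : Polynomial.X * Polynomial.X ^ (k - (s + 1))
        = (Polynomial.X : Polynomial ℚ) ^ (k - s) := by
      have h6 : k - s = (k - (s + 1)) + 1 := by omega
      rw [h6, pow_succ']
    rw [gcTerm, gcTerm, pascal, he]
    have e7 : k + (s + 1) = k + s + 1 := by omega
    have e8 : 2 * (s + 1) = 2 * s + 2 := by omega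
    rw [e7, e8, ← mul_assoc Polynomial.X, ← mul_assoc Polynomial.X, hx, Nat.cast_add, mul_add,
      map_add]
    ring
  · have hsk : s = k := by omega
    subst hsk
    have hz : (s + (s + 1)).choose (2 * (s + 1)) = 0 := Nat.choose_eq_zero_of_lt (by omega)
    have hz2 : ((s + 1) + (s + 1)).choose (2 * (s + 1)) = (s + s + 1).choose (2 * s + 1) := by
      have e1 : (s + 1) + (s + 1) = 2 * (s + 1) := by omega
      have e2 : s + s + 1 = 2 * s + 1 := by omega
      rw [e1, e2, Nat.choose_self, Nat.choose_self]
    rw [gcTerm, gcTerm, hz, hz2, he]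
    simp

lemma gc_cross (k p1 p2 a b : ℕ) (hp : p1 + p2 = k) :
    (1 - Polynomial.X) * (gcTerm p1 a * gcTerm p2 b)
      = Polynomial.X ^ (k - (a + b)) * (1 - Polynomial.X) ^ (a + b + 1) *
          Polynomial.C (((catalan a : ℚ) * (catalan b : ℚ)) *
            (((p1 + a).choose (2 * a) : ℚ) * ((p2 + b).choose (2 * b) : ℚ))) := by
  rcases Nat.lt_or_ge p1 a with h1 | h1
  · have h : p1 + a < 2 * a := by omega
    simp [gcTerm, Nat.choose_eq_zero_of_lt h]
  rcases Nat.lt_or_ge p2 b with h2 | h2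
  · have h : p2 + b < 2 * b := by omega
    simp [gcTerm, Nat.choose_eq_zero_of_lt h]
  have hx : (Polynomial.X : Polynomial ℚ) ^ (k - (a + b))
      = Polynomial.X ^ (p1 - a) * Polynomial.X ^ (p2 - b) := by
    rw [← pow_add]
    congr 1
    omega
  have hy : ((1 : Polynomial ℚ) - Polynomial.X) ^ (a + b + 1)
      = (1 - Polynomial.X) ^ a * (1 - Polynomial.X) ^ b * (1 - Polynomial.X) := by
    rw [pow_succ, pow_add]
  rw [gcTerm, gcTerm, hx, hy]
  simp only [map_mul]
  ring

lemma group_sum {M : Type*} [AddCommMonoid M] (k : ℕ) (f : ℕ × ℕ → M)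
    (hf : ∀ p : ℕ × ℕ, k < p.1 + p.2 → f p = 0) :
    ∑ p ∈ Finset.range (k + 1) ×ˢ Finset.range (k + 1), f p
      = ∑ s ∈ Finset.range (k + 1), ∑ p ∈ Finset.HasAntidiagonal.antidiagonal s, f p := by
  rw [← Finset.sum_biUnion]
  · apply (Finset.sum_subset _ _).symm
    · intro p hp
      simp only [Finset.mem_biUnion, Finset.mem_range, Finset.HasAntidiagonal.mem_antidiagonal] at hp
      obtain ⟨s, hs, hps⟩ := hp
      simp only [Finset.mem_product, Finset.mem_range]
      omega
    · intro p hp hnp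
      apply hf
      simp only [Finset.mem_product, Finset.mem_range] at hp
      by_contra hc
      push_neg at hc
      exact hnp (Finset.mem_biUnion.mpr ⟨p.1 + p.2, Finset.mem_range.mpr (by omega),
        Finset.HasAntidiagonal.mem_antidiagonal.mpr rfl⟩)
  · intro s hs t ht hst
    apply Finset.disjoint_left.mpr
    intro p hps hpt
    rw [Finset.HasAntidiagonal.mem_antidiagonal] at hps hpt
    exact hst (by omega)

/-- The key recurrence of the generalized Catalan polynomials. -/
lemma genCatalan_rec (k : ℕ) :
    genCatalan (k + 1) - Polynomial.X * genCatalan k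
      = (1 - Polynomial.X) * ∑ p ∈ Finset.HasAntidiagonal.antidiagonal k, genCatalan p.1 * genCatalan p.2 := by
  -- the common middle form
  have hL : genCatalan (k + 1) - Polynomial.X * genCatalan k
      = ∑ s ∈ Finset.range (k + 1), Polynomial.X ^ (k - s) * (1 - Polynomial.X) ^ (s + 1) *
          Polynomial.C ((catalan (s + 1) : ℚ) * ((k + s + 1).choose (2 * s + 1) : ℚ)) := by
    rw [genCatalan_eq_sum (k + 1) (k + 2) (by omega), genCatalan_eq_sum k (k + 2) (by omega),
      Finset.mul_sum, ← Finset.sum_sub_distrib, Finset.sum_range_succ']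
    have h0 : gcTerm (k + 1) 0 - Polynomial.X * gcTerm k 0 = 0 := by
      simp [gcTerm, pow_succ, mul_comm]
    rw [h0, add_zero]
    exact Finset.sum_congr rfl fun s hs =>
      gc_step k s (by simp only [Finset.mem_range] at hs; omega)
  rw [hL]
  -- expand the RHS
  have hgc : ∀ p ∈ Finset.HasAntidiagonal.antidiagonal k, genCatalan p.1 * genCatalan p.2
      = ∑ q ∈ Finset.range (k + 1) ×ˢ Finset.range (k + 1),
          gcTerm p.1 q.1 * gcTerm p.2 q.2 := by
    intro p hp
    rw [Finset.HasAntidiagonal.mem_antidiagonal] at hp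
    rw [genCatalan_eq_sum p.1 (k + 1) (by omega), genCatalan_eq_sum p.2 (k + 1) (by omega),
      Finset.sum_mul_sum, ← Finset.sum_product']
  rw [Finset.sum_congr rfl hgc]
  simp only [Finset.mul_sum]
  rw [Finset.sum_comm]
  have hin : ∀ q ∈ Finset.range (k + 1) ×ˢ Finset.range (k + 1),
      (∑ p ∈ Finset.HasAntidiagonal.antidiagonal k, (1 - Polynomial.X) * (gcTerm p.1 q.1 * gcTerm p.2 q.2))
        = Polynomial.X ^ (k - (q.1 + q.2)) * (1 - Polynomial.X) ^ (q.1 + q.2 + 1) *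
            Polynomial.C (((catalan q.1 : ℚ) * (catalan q.2 : ℚ)) *
              ((k + (q.1 + q.2) + 1).choose (2 * (q.1 + q.2) + 1) : ℚ)) := by
    intro q _
    have h1 : ∀ p ∈ Finset.HasAntidiagonal.antidiagonal k,
        (1 - Polynomial.X) * (gcTerm p.1 q.1 * gcTerm p.2 q.2)
          = Polynomial.X ^ (k - (q.1 + q.2)) * (1 - Polynomial.X) ^ (q.1 + q.2 + 1) *
              Polynomial.C (((catalan q.1 : ℚ) * (catalan q.2 : ℚ)) *
                (((p.1 + q.1).choose (2 * q.1) : ℚ) * ((p.2 + q.2).choose (2 * q.2) : ℚ))) :=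
      fun p hp => gc_cross k p.1 p.2 q.1 q.2 (Finset.HasAntidiagonal.mem_antidiagonal.mp hp)
    rw [Finset.sum_congr rfl h1, ← Finset.mul_sum, ← map_sum, ← Finset.mul_sum, chooseConv]
  refine Eq.symm ?_
  calc ∑ q ∈ Finset.range (k + 1) ×ˢ Finset.range (k + 1),
        ∑ p ∈ Finset.HasAntidiagonal.antidiagonal k, (1 - Polynomial.X) * (gcTerm p.1 q.1 * gcTerm p.2 q.2)
      = ∑ q ∈ Finset.range (k + 1) ×ˢ Finset.range (k + 1),
          Polynomial.X ^ (k - (q.1 + q.2)) * (1 - Polynomial.X) ^ (q.1 + q.2 + 1) *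
            Polynomial.C (((catalan q.1 : ℚ) * (catalan q.2 : ℚ)) *
              ((k + (q.1 + q.2) + 1).choose (2 * (q.1 + q.2) + 1) : ℚ)) :=
        Finset.sum_congr rfl hin
    _ = ∑ s ∈ Finset.range (k + 1), ∑ q ∈ Finset.HasAntidiagonal.antidiagonal s,
          Polynomial.X ^ (k - (q.1 + q.2)) * (1 - Polynomial.X) ^ (q.1 + q.2 + 1) *
            Polynomial.C (((catalan q.1 : ℚ) * (catalan q.2 : ℚ)) *
              ((k + (q.1 + q.2) + 1).choose (2 * (q.1 + q.2) + 1) : ℚ)) := by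
        apply group_sum
        intro p hp
        have : (k + (p.1 + p.2) + 1).choose (2 * (p.1 + p.2) + 1) = 0 :=
          Nat.choose_eq_zero_of_lt (by omega)
        rw [this]
        simp
    _ = ∑ s ∈ Finset.range (k + 1), Polynomial.X ^ (k - s) * (1 - Polynomial.X) ^ (s + 1) *
          Polynomial.C ((catalan (s + 1) : ℚ) * ((k + s + 1).choose (2 * s + 1) : ℚ)) := by
        apply Finset.sum_congr rfl
        intro s hs
        have h2 : ∀ q ∈ Finset.HasAntidiagonal.antidiagonal s,
            Polynomial.X ^ (k - (q.1 + q.2)) * (1 - Polynomial.X) ^ (q.1 + q.2 + 1) *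
              Polynomial.C (((catalan q.1 : ℚ) * (catalan q.2 : ℚ)) *
                ((k + (q.1 + q.2) + 1).choose (2 * (q.1 + q.2) + 1) : ℚ))
            = Polynomial.X ^ (k - s) * (1 - Polynomial.X) ^ (s + 1) *
                Polynomial.C (((catalan q.1 : ℚ) * (catalan q.2 : ℚ)) *
                  ((k + s + 1).choose (2 * s + 1) : ℚ)) := by
          intro q hq
          rw [Finset.HasAntidiagonal.mem_antidiagonal] at hq
          rw [hq]
        rw [Finset.sum_congr rfl h2, ← Finset.mul_sum, ← map_sum, ← Finset.sum_mul]
        congr 2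
        have := catalan_succ' s
        have hc : (catalan (s + 1) : ℚ) = ∑ q ∈ Finset.HasAntidiagonal.antidiagonal s,
            (catalan q.1 : ℚ) * (catalan q.2 : ℚ) := by
          rw [this]
          push_cast
          rfl
        rw [hc]

/-- The generating function `𝐂(u) = ∑_{r≥0} 𝒞(r) uʳ` of the generalized Catalan
polynomials satisfies `𝐂(u) - 1 - z·u·𝐂(u) = (1-z)·u·𝐂(u)²` as formal power
series in `u` over `ℚ[z]`. -/
theorem genCatalan_functional_equation :
    (PowerSeries.mk fun r => genCatalan r) - 1 -
        PowerSeries.C (Polynomial.X : Polynomial ℚ) * PowerSeries.X *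
          (PowerSeries.mk fun r => genCatalan r) =
      PowerSeries.C (1 - Polynomial.X : Polynomial ℚ) * PowerSeries.X *
        (PowerSeries.mk fun r => genCatalan r) ^ 2 := by
  have hL : ∀ (a : Polynomial ℚ) (f : PowerSeries (Polynomial ℚ)),
      PowerSeries.C a * PowerSeries.X * f
        = PowerSeries.X * (PowerSeries.C a * f) := by
    intro a f; ring
  apply PowerSeries.ext
  intro n
  rw [hL, hL, map_sub, map_sub]
  rcases n with _ | k
  · rw [PowerSeries.coeff_zero_X_mul, PowerSeries.coeff_zero_X_mul]
    simp [genCatalan]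
  · rw [PowerSeries.coeff_succ_X_mul, PowerSeries.coeff_succ_X_mul,
      PowerSeries.coeff_C_mul, PowerSeries.coeff_C_mul, PowerSeries.coeff_mk]
    have h1 : PowerSeries.coeff (k + 1) (1 : PowerSeries (Polynomial ℚ)) = 0 := by
      rw [PowerSeries.coeff_one]
      simp
    rw [h1, sub_zero, sq, PowerSeries.coeff_mul]
    simp only [PowerSeries.coeff_mk]
    exact genCatalan_rec k
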